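/- Let X be a graph, G a group, α: E_X -> G a voltage assignment (α(ē) = α(e)^{-1}), and I = {I_v : v ∈ V_X} a collection of subgroups of G. The derived graph Y = X(G, I, α), with vertex set the disjoint union over v of {v} × G/I_v, edge set E_X × G, origin of (e,σ) equal to (o(e), σI_{o(e)}), terminus (t(e), σα(e)I_{t(e)}), and inversion (e,σ)-bar = (ē, σα(e)), is a graph, and the natural projection p: Y -> X is a branched cover whose ramification index at any vertex (v, σI_v) equals |I_v|. -/

import Mathlib

/-- A graph in Serre's formalism. -/
structure SerreGraph where
  V : Type
  E : Type
  o : E → V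
  t : E → V
  inv : E → E
  inv_ne : ∀ e, inv e ≠ e
  inv_inv : ∀ e, inv (inv e) = e
  o_inv : ∀ e, o (inv e) = t e

namespace SerreGraph

variable (X : SerreGraph)

/-- `Adj a b` : there is a directed edge from `a` to `b`. -/
def Adj (a b : X.V) : Prop := ∃ e, X.o e = a ∧ X.t e = b

/-- A graph is connected if any two vertices are joined by a path of directed edges. -/
def Connected : Prop := ∀ a b : X.V, Relation.ReflTransGen X.Adj a b

/-- The degree (sum of coefficients) map `s : Div(X) → ℤ`. -/
noncomputable def degMap : (X.V →₀ ℤ) →ₗ[ℤ] ℤ :=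
  Finsupp.lsum ℤ fun _ => (LinearMap.id : ℤ →ₗ[ℤ] ℤ)

/-- The valency of a vertex: the number of directed edges with origin `v`. -/
noncomputable def val (v : X.V) : ℕ := Nat.card {e : X.E // X.o e = v}

/-- The Laplacian operator `L = D - A` on `Div(X)`, the free abelian group on vertices. -/
noncomputable def lap : (X.V →₀ ℤ) →ₗ[ℤ] (X.V →₀ ℤ) :=
  Finsupp.lsum ℤ fun v => LinearMap.toSpanSingleton ℤ _
    ((X.val v : ℤ) • Finsupp.single v (1 : ℤ)
      - ∑ᶠ e : {e : X.E // X.o e = v}, Finsupp.single (X.t e.1) (1 : ℤ))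

/-- The degree operator `D` on `Div(X)`. -/
noncomputable def degOp : (X.V →₀ ℤ) →ₗ[ℤ] (X.V →₀ ℤ) :=
  Finsupp.lsum ℤ fun v => LinearMap.toSpanSingleton ℤ _
    ((X.val v : ℤ) • Finsupp.single v (1 : ℤ))

/-- The adjacency operator `A` on `Div(X)`. -/
noncomputable def adjOp : (X.V →₀ ℤ) →ₗ[ℤ] (X.V →₀ ℤ) :=
  Finsupp.lsum ℤ fun v => LinearMap.toSpanSingleton ℤ _
    (∑ᶠ e : {e : X.E // X.o e = v}, Finsupp.single (X.t e.1) (1 : ℤ))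

/-- Degree-zero divisors. -/
noncomputable def Div0 : Submodule ℤ (X.V →₀ ℤ) := LinearMap.ker X.degMap

/-- Principal divisors: the image of the Laplacian. -/
noncomputable def Pr : Submodule ℤ (X.V →₀ ℤ) := LinearMap.range X.lap

/-- The Picard group of degree zero: `Div⁰(X)/Pr(X)`. -/
noncomputable def Pic0 := X.Div0 ⧸ X.Pr.comap X.Div0.subtype

noncomputable instance : AddCommGroup X.Pic0 :=
  inferInstanceAs (AddCommGroup (X.Div0 ⧸ X.Pr.comap X.Div0.subtype))

noncomputable instance : Module ℤ X.Pic0 :=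
  inferInstanceAs (Module ℤ (X.Div0 ⧸ X.Pr.comap X.Div0.subtype))

/-- Morphisms of graphs in Serre's formalism. -/
structure Hom (Y X : SerreGraph) where
  fV : Y.V → X.V
  fE : Y.E → X.E
  o_map : ∀ e, X.o (fE e) = fV (Y.o e)
  t_map : ∀ e, X.t (fE e) = fV (Y.t e)
  inv_map : ∀ e, X.inv (fE e) = fE (Y.inv e)

/-- A branched cover with ramification indices `m`: surjective on vertices and
directed edges, and over each edge at `f(w)` the fiber in the edges at `w`
has cardinality `m w`. -/
def IsBranchedCover {Y X : SerreGraph} (f : Hom Y X) (m : Y.V → ℕ) : Prop :=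
  Function.Surjective f.fV ∧ Function.Surjective f.fE ∧
    ∀ (w : Y.V) (e : X.E), X.o e = f.fV w →
      Nat.card {ε : Y.E // Y.o ε = w ∧ f.fE ε = e} = m w

/-- The pushforward `f_* : Div(Y) → Div(X)`, sending a vertex `w` to `f(w)`. -/
noncomputable def pushforward {Y X : SerreGraph} (f : Hom Y X) :
    (Y.V →₀ ℤ) →ₗ[ℤ] (X.V →₀ ℤ) :=
  Finsupp.lmapDomain ℤ ℤ f.fV

end SerreGraph
namespace SerreGraph

variable (X : SerreGraph) (G : Type) [Group G]

/-- The derived graph `X(G, I, α)` of a voltage assignment `α` with a family of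
subgroups `I`. -/
def Derived (I : X.V → Subgroup G) (α : X.E → G)
    (hα : ∀ e, α (X.inv e) = (α e)⁻¹) : SerreGraph where
  V := Σ v : X.V, G ⧸ I v
  E := X.E × G
  o := fun ε => ⟨X.o ε.1, QuotientGroup.mk ε.2⟩
  t := fun ε => ⟨X.t ε.1, QuotientGroup.mk (ε.2 * α ε.1)⟩
  inv := fun ε => (X.inv ε.1, ε.2 * α ε.1)
  inv_ne := fun ε h => X.inv_ne ε.1 (congrArg Prod.fst h)
  inv_inv := fun ε => by
    have h1 := X.inv_inv ε.1
    have h2 := hα ε.1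
    simp [h1, h2, mul_assoc]
  o_inv := fun ε =>
    congrArg (fun p => (⟨p, QuotientGroup.mk (ε.2 * α ε.1)⟩ : Σ v : X.V, G ⧸ I v))
      (X.o_inv ε.1)

/-- The natural projection `X(G, I, α) → X` is a morphism of graphs. -/
def derivedProj (I : X.V → Subgroup G) (α : X.E → G)
    (hα : ∀ e, α (X.inv e) = (α e)⁻¹) : Hom (X.Derived G I α hα) X where
  fV := fun w => w.1
  fE := fun ε => ε.1
  o_map := fun _ => rfl
  t_map := fun _ => rfl
  inv_map := fun _ => rfl

end SerreGraph

open SerreGraph in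
/-- The derived graph `Y = X(G, I, α)` of a voltage assignment
`α : E_X → G` (with `α(ē) = α(e)⁻¹`) and subgroups `I_v ≤ G` is a graph (witnessed by the
construction `SerreGraph.Derived`), and the natural projection `p : Y → X` is a branched
cover whose ramification index at any vertex `(v, σ I_v)` is `|I_v|`. -/
theorem derived_proj_is_branched_cover (X : SerreGraph) (G : Type) [Group G]
    (I : X.V → Subgroup G) (α : X.E → G) (hα : ∀ e, α (X.inv e) = (α e)⁻¹) :
    IsBranchedCover (X.derivedProj G I α hα) (fun w => Nat.card (I w.1)) := by
  refine ⟨fun v => ⟨⟨v, QuotientGroup.mk 1⟩, rfl⟩, fun e => ⟨(e, 1), rfl⟩, ?_⟩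
  rintro ⟨v, q⟩ e he
  simp only [derivedProj] at he ⊢
  subst he
  obtain ⟨σ, rfl⟩ := QuotientGroup.mk_surjective q
  refine Nat.card_congr ?_
  refine ⟨fun ε => ⟨σ⁻¹ * ε.1.2, ?_⟩, fun h => ⟨(e, σ * h.1), ?_, rfl⟩, ?_, ?_⟩
  · obtain ⟨⟨e', g⟩, h1, he'⟩ := ε
    dsimp only at he' ⊢
    subst he'
    exact QuotientGroup.eq.mp (eq_of_heq (Sigma.mk.inj_iff.mp h1).2).symm
  · show (⟨X.o e, QuotientGroup.mk (σ * h.1)⟩ : Σ v : X.V, G ⧸ I v) = ⟨X.o e, QuotientGroup.mk σ⟩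
    congr 1
    exact (QuotientGroup.eq.mpr (by simp)).symm
  · rintro ⟨⟨e', g⟩, h1, he'⟩
    dsimp only at he'
    exact Subtype.ext (by simp [he']; rfl)
  · rintro ⟨g, hg⟩
    simp
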